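/- Let C be a non-singular integral affine curve over a field k of characteristic 0 with A = k[C], and suppose the A-module Ω_{A/k} is free with basis dt for some t ∈ A. Let I = ker(μ: A⊗_k A → A). Then for every f ∈ A and every r ≥ 1 one has the Taylor congruence δ(f) ≡ f'·δ(t) + (1/2!)f''·δ(t)² + ... + (1/r!)f^{(r)}·δ(t)^r modulo I^{r+1}, where f' = df/dt and f^{(i)} are iterated derivatives, and A acts on A⊗A through the second factor. -/

import Mathlib

open scoped TensorProduct
open Finset

universe u

/-- Iterated Leibniz rule for a linear endomorphism satisfying the Leibniz rule. -/
theorem iterLeibniz {k A : Type u} [CommSemiring k] [CommRing A] [Algebra k A]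
    (d : Module.End k A) (hder : ∀ a b : A, d (a * b) = a * d b + b * d a) :
    ∀ (n : ℕ) (a b : A), (d ^ n) (a * b) =
      ∑ i ∈ range (n + 1), n.choose i • ((d ^ i) a * (d ^ (n - i)) b) := by
  intro n
  induction n with
  | zero => intro a b; simp
  | succ n ih =>
    intro a b
    have hp : ∀ (m : ℕ) (x : A), d ((d ^ m) x) = (d ^ (m+1)) x := by
      intro m x; rw [pow_succ']; rfl
    have step : (d ^ (n+1)) (a*b) =
        ∑ i ∈ range (n+1), n.choose i •
          ((d ^ i) a * (d ^ (n+1-i)) b + (d ^ (i+1)) a * (d ^ (n-i)) b) := by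
      rw [← hp n (a*b), ih a b, map_sum]
      refine Finset.sum_congr rfl fun i hi => ?_
      have : n - i + 1 = n + 1 - i := by
        have := Finset.mem_range.mp hi; omega
      rw [map_nsmul, hder, hp, hp, this, mul_comm ((d ^ (n-i)) b)]
    rw [step]
    set T : ℕ → A := fun i => (d ^ i) a * (d ^ (n+1-i)) b with hT
    have lhs_eq : ∑ i ∈ range (n+1), n.choose i •
          ((d ^ i) a * (d ^ (n+1-i)) b + (d ^ (i+1)) a * (d ^ (n-i)) b)
        = (∑ i ∈ range (n+1), n.choose i • T i)
          + ∑ i ∈ range (n+1), n.choose i • T (i+1) := by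
      rw [← Finset.sum_add_distrib]
      refine Finset.sum_congr rfl fun i hi => ?_
      have : n + 1 - (i+1) = n - i := by omega
      simp [hT, this, smul_add]
    rw [lhs_eq]
    have rhs_eq : ∑ i ∈ range (n+2), (n+1).choose i • T i
        = (∑ i ∈ range (n+1), n.choose i • T (i+1))
          + ∑ i ∈ range (n+1), n.choose i • T i := by
      rw [Finset.sum_range_succ' (fun i => (n+1).choose i • T i) (n+1)]
      have h1 : ∀ i, (n+1).choose (i+1) • T (i+1)
          = n.choose i • T (i+1) + n.choose (i+1) • T (i+1) := by
        intro i; rw [Nat.choose_succ_succ, add_nsmul]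
      calc (∑ i ∈ range (n+1), (n+1).choose (i+1) • T (i+1)) + (n+1).choose 0 • T 0
          = (∑ i ∈ range (n+1), (n.choose i • T (i+1) + n.choose (i+1) • T (i+1)))
            + T 0 := by
            simp only [h1, Nat.choose_zero_right, one_smul]
        _ = (∑ i ∈ range (n+1), n.choose i • T (i+1))
            + ((∑ i ∈ range (n+1), n.choose (i+1) • T (i+1)) + T 0) := by
            rw [Finset.sum_add_distrib]; ring
        _ = (∑ i ∈ range (n+1), n.choose i • T (i+1))
            + ∑ i ∈ range (n+2), n.choose i • T i := by
            rw [Finset.sum_range_succ' (fun i => n.choose i • T i) (n+1)]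
            simp
        _ = (∑ i ∈ range (n+1), n.choose i • T (i+1))
            + ∑ i ∈ range (n+1), n.choose i • T i := by
            rw [Finset.sum_range_succ (fun i => n.choose i • T i) (n+1)]
            simp
    rw [rhs_eq]
    ring

lemma factCoeff {k : Type u} [Field k] [CharZero k] {i n : ℕ} (h : i ≤ n) :
    ((n.factorial : k))⁻¹ * (n.choose i : k) =
      ((i.factorial : k))⁻¹ * (((n - i).factorial : k))⁻¹ := by
  have hh := Nat.choose_mul_factorial_mul_factorial h
  have hc : ((n.choose i : k)) * (i.factorial : k) * ((n - i).factorial : k)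
      = (n.factorial : k) := by exact_mod_cast congrArg (Nat.cast : ℕ → k) hh
  have h1 : (n.factorial : k) ≠ 0 := Nat.cast_ne_zero.2 n.factorial_ne_zero
  have h2 : (i.factorial : k) ≠ 0 := Nat.cast_ne_zero.2 i.factorial_ne_zero
  have h3 : (((n - i).factorial : k)) ≠ 0 := Nat.cast_ne_zero.2 (n - i).factorial_ne_zero
  field_simp
  linear_combination hc

lemma squareToTriangle {M : Type u} [AddCommMonoid M] (r : ℕ) (G : ℕ → ℕ → M)
    (hv : ∀ i j, r < i + j → G i j = 0) :
    ∑ i ∈ range (r + 1), ∑ j ∈ range (r + 1), G i j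
      = ∑ n ∈ range (r + 1), ∑ i ∈ range (n + 1), G i (n - i) := by
  have hsig : ∑ x ∈ (range (r+1)).sigma (fun n => range (n+1)), G x.2 (x.1 - x.2)
      = ∑ n ∈ range (r + 1), ∑ i ∈ range (n + 1), G i (n - i) :=
    Finset.sum_sigma _ _ _
  rw [← Finset.sum_product' (s := range (r+1)) (t := range (r+1)) (f := G), ← hsig]
  rw [← Finset.sum_filter_add_sum_filter_not (range (r+1) ×ˢ range (r+1))
    (fun p => p.1 + p.2 ≤ r)]
  have hz : ∑ p ∈ (range (r+1) ×ˢ range (r+1)).filter (fun p => ¬ p.1 + p.2 ≤ r),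
      G p.1 p.2 = 0 := by
    refine Finset.sum_eq_zero fun p hp => ?_
    simp only [Finset.mem_filter, not_le] at hp
    exact hv p.1 p.2 hp.2
  rw [hz, add_zero]
  refine Finset.sum_nbij' (i := fun p => (⟨p.1 + p.2, p.1⟩ : Σ _ : ℕ, ℕ))
    (j := fun x => (x.2, x.1 - x.2)) ?_ ?_ ?_ ?_ ?_
  · intro p hp
    simp only [Finset.mem_filter, Finset.mem_product, Finset.mem_range] at hp
    simp only [Finset.mem_sigma, Finset.mem_range]
    omega
  · intro x hx
    simp only [Finset.mem_sigma, Finset.mem_range] at hx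
    simp only [Finset.mem_filter, Finset.mem_product, Finset.mem_range]
    omega
  · intro p hp; simp
  · intro x hx
    simp only [Finset.mem_sigma, Finset.mem_range] at hx
    ext <;> simp <;> omega
  · intro p hp; simp

lemma expMul {k A B : Type u} [Field k] [CharZero k] [CommRing A] [Algebra k A]
    [CommRing B] [Algebra k B] (τ : A →ₐ[k] B) (d : Module.End k A)
    (hder : ∀ a b : A, d (a * b) = a * d b + b * d a)
    (u : B) (r : ℕ) (hu : u ^ (r + 1) = 0) (a b : A) :
    (∑ i ∈ range (r + 1), ((i.factorial : k))⁻¹ • (τ ((d ^ i) a) * u ^ i)) *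
      (∑ j ∈ range (r + 1), ((j.factorial : k))⁻¹ • (τ ((d ^ j) b) * u ^ j))
      = ∑ n ∈ range (r + 1), ((n.factorial : k))⁻¹ • (τ ((d ^ n) (a * b)) * u ^ n) := by
  set G : ℕ → ℕ → B := fun i j =>
    (((i.factorial : k))⁻¹ * ((j.factorial : k))⁻¹) •
      (τ ((d ^ i) a) * τ ((d ^ j) b) * u ^ (i + j)) with hG
  have hv : ∀ i j, r < i + j → G i j = 0 := by
    intro i j hij
    have : u ^ (i + j) = 0 := pow_eq_zero_of_le (by omega) hu
    simp [hG, this]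
  have lhs_eq : (∑ i ∈ range (r + 1), ((i.factorial : k))⁻¹ • (τ ((d ^ i) a) * u ^ i)) *
      (∑ j ∈ range (r + 1), ((j.factorial : k))⁻¹ • (τ ((d ^ j) b) * u ^ j))
      = ∑ i ∈ range (r + 1), ∑ j ∈ range (r + 1), G i j := by
    rw [Finset.sum_mul_sum]
    refine Finset.sum_congr rfl fun i _ => Finset.sum_congr rfl fun j _ => ?_
    rw [smul_mul_smul_comm, mul_mul_mul_comm, ← pow_add]
  have rhs_eq : ∑ n ∈ range (r + 1), ((n.factorial : k))⁻¹ • (τ ((d ^ n) (a * b)) * u ^ n)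
      = ∑ n ∈ range (r + 1), ∑ i ∈ range (n + 1), G i (n - i) := by
    refine Finset.sum_congr rfl fun n _ => ?_
    rw [iterLeibniz d hder n a b, map_sum, Finset.sum_mul, Finset.smul_sum]
    refine Finset.sum_congr rfl fun i hi => ?_
    have hin : i ≤ n := by have := Finset.mem_range.mp hi; omega
    rw [map_nsmul, smul_mul_assoc, ← Nat.cast_smul_eq_nsmul k, smul_smul,
      factCoeff hin, map_mul, hG]
    have : i + (n - i) = n := by omega
    simp only [this]
  rw [lhs_eq, rhs_eq, squareToTriangle r G hv]

set_option maxHeartbeats 1000000 in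
set_option synthInstance.maxHeartbeats 400000 in
theorem taylorAux (k : Type u) [Field k] [CharZero k]
    (A : Type u) [CommRing A] [Algebra k A]
    (t : A) (d : Module.End k A)
    (hder : ∀ a b : A, d (a * b) = a * d b + b * d a)
    (hdt : d t = 1)
    (hd : ∀ f : A, KaehlerDifferential.D k A f = d f • KaehlerDifferential.D k A t)
    (f : A) (r : ℕ) (hr : 1 ≤ r) :
    f ⊗ₜ[k] (1 : A) - (1 : A) ⊗ₜ[k] f - ∑ i ∈ Finset.Icc 1 r,
        algebraMap k (A ⊗[k] A) ((Nat.factorial i : k)⁻¹) *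
          ((1 : A) ⊗ₜ[k] ((d ^ i) f)) *
          (t ⊗ₜ[k] (1 : A) - (1 : A) ⊗ₜ[k] t) ^ i
      ∈ (RingHom.ker (Algebra.TensorProduct.lmul' k (S := A)).toRingHom) ^ (r + 1) := by
  obtain ⟨r', rfl⟩ : ∃ r'', r = r'' + 1 := ⟨r - 1, by omega⟩
  -- basic facts about d
  have hd1 : d 1 = 0 := by
    have := hder 1 1; simpa using this
  have hdti : ∀ i, 2 ≤ i → (d ^ i) t = 0 := by
    intro i hi
    obtain ⟨j, rfl⟩ : ∃ j, i = j + 2 := ⟨i - 2, by omega⟩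
    have h2 : (d ^ (j + 2)) t = (d ^ j) ((d ^ 2) t) := by
      rw [pow_add]; rfl
    have h3 : (d ^ 2) t = 0 := by
      have : (d ^ 2) t = d (d t) := by rw [pow_two]; rfl
      rw [this, hdt, hd1]
    rw [h2, h3, map_zero]
  -- the setup
  set μ : (A ⊗[k] A) →+* A := (Algebra.TensorProduct.lmul' k (S := A)).toRingHom with hμ
  set I : Ideal (A ⊗[k] A) := RingHom.ker μ with hI
  set J : Ideal (A ⊗[k] A) := I ^ (r' + 2) with hJ
  set B := (A ⊗[k] A) ⧸ J with hB
  set Q : (A ⊗[k] A) →ₐ[k] B := Ideal.Quotient.mkₐ k J with hQ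
  set δt : A ⊗[k] A := t ⊗ₜ[k] (1 : A) - (1 : A) ⊗ₜ[k] t with hδt
  have hδtI : δt ∈ I := by
    rw [hI, RingHom.mem_ker, map_sub]
    simp [hμ]
  set u : B := Q δt with hu'
  have hu : u ^ (r' + 2) = 0 := by
    have h1 : δt ^ (r' + 2) ∈ J := by rw [hJ]; exact Ideal.pow_mem_pow hδtI (r' + 2)
    have h2 : Q (δt ^ (r' + 2)) = 0 := by
      rw [hQ, Ideal.Quotient.mkₐ_eq_mk]
      exact Ideal.Quotient.eq_zero_iff_mem.mpr h1
    rw [hu', ← map_pow]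
    exact h2
  set τ : A →ₐ[k] B := Q.comp (Algebra.TensorProduct.includeRight) with hτ
  -- the Taylor map
  set W : A → A ⊗[k] A := fun g => ∑ i ∈ range (r' + 2),
    ((i.factorial : k))⁻¹ • (((1 : A) ⊗ₜ[k] ((d ^ i) g)) * δt ^ i) with hW
  set E : A → B := fun g => ∑ i ∈ range (r' + 2),
    ((i.factorial : k))⁻¹ • (τ ((d ^ i) g) * u ^ i) with hE
  have hQW : ∀ g, Q (W g) = E g := by
    intro g
    simp only [hW, hE, map_sum, map_smul, map_mul, map_pow, hτ, AlgHom.coe_comp,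
      Function.comp_apply, Algebra.TensorProduct.includeRight_apply]
    rw [← hu']
  -- E as an algebra hom
  have Eone : E 1 = 1 := by
    show (∑ i ∈ range (r' + 2), ((i.factorial : k))⁻¹ • (τ ((d ^ i) (1:A)) * u ^ i)) = 1
    rw [Finset.sum_eq_single 0]
    · simp
    · intro i _ hi
      obtain ⟨j, rfl⟩ : ∃ j, i = j + 1 := ⟨i - 1, by omega⟩
      have : (d ^ (j + 1)) (1 : A) = (d ^ j) (d 1) := by rw [pow_succ]; rfl
      rw [this, hd1, map_zero, map_zero, zero_mul, smul_zero]
    · intro h; simp at h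
  set Elin : A →ₗ[k] B :=
    { toFun := E
      map_add' := by
        intro x y
        show E (x + y) = E x + E y
        simp only [hE]
        simp only [map_add, add_mul, smul_add]
        rw [Finset.sum_add_distrib]
      map_smul' := by
        intro c x
        show E (c • x) = c • E x
        simp only [hE]
        simp only [map_smul, smul_mul_assoc, RingHom.id_apply, Finset.smul_sum]
        refine Finset.sum_congr rfl fun i _ => ?_
        rw [smul_comm] } with hElin
  set ψ₀ : A →ₐ[k] B := AlgHom.ofLinearMap Elin Eone
    (fun x y => (expMul τ d hder u (r' + 1) hu x y).symm) with hψ₀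
  set φ₀ : A →ₐ[k] B := Q.comp (Algebra.TensorProduct.includeLeft) with hφ₀
  have hψ₀app : ∀ g, ψ₀ g = E g := fun g => rfl
  have hφ₀app : ∀ g, φ₀ g = Q (g ⊗ₜ[k] (1 : A)) := fun g => rfl
  -- ψ₀ and φ₀ agree at t
  have hψt : ψ₀ t = φ₀ t := by
    rw [hψ₀app, hφ₀app]
    show (∑ i ∈ range (r' + 2), ((i.factorial : k))⁻¹ • (τ ((d ^ i) t) * u ^ i))
      = Q (t ⊗ₜ[k] (1:A))
    rw [Finset.sum_range_succ' _ (r' + 1), Finset.sum_range_succ' _ r']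
    have hz : ∀ i ∈ range r', ((((i + 1 + 1).factorial : k))⁻¹ •
        (τ ((d ^ (i + 1 + 1)) t) * u ^ (i + 1 + 1))) = 0 := by
      intro i _
      rw [hdti (i + 1 + 1) (by omega), map_zero, zero_mul, smul_zero]
    rw [Finset.sum_eq_zero hz]
    have h1 : (d ^ 1) t = 1 := by simpa using hdt
    have h0 : (d ^ 0) t = t := rfl
    simp only [zero_add, h1, h0, Nat.factorial_one, Nat.factorial_zero, Nat.cast_one, inv_one,
      one_smul, pow_one, pow_zero, mul_one, map_one, one_mul, zero_add]
    have : t ⊗ₜ[k] (1 : A) = (1 : A) ⊗ₜ[k] t + δt := by rw [hδt]; ring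
    rw [this, map_add, hdt, map_one, one_mul, Module.End.one_apply, add_comm]
    rfl
  -- A is formally unramified over k[t]
  letI : Algebra (Polynomial k) A := (Polynomial.aeval t).toRingHom.toAlgebra
  haveI : IsScalarTower k (Polynomial k) A := by
    refine IsScalarTower.of_algebraMap_eq fun c => ?_
    rw [RingHom.algebraMap_toAlgebra, Polynomial.algebraMap_eq]
    simp [Polynomial.aeval_C]
  haveI hFU : Algebra.FormallyUnramified (Polynomial k) A := by
    refine ⟨?_⟩
    have htA : t = algebraMap (Polynomial k) A Polynomial.X := by
      rw [RingHom.algebraMap_toAlgebra]; exact (Polynomial.aeval_X t).symm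
    have htt : KaehlerDifferential.D (Polynomial k) A t = 0 := by
      rw [htA]; exact Derivation.map_algebraMap _ _
    have hDzero : ∀ a : A, KaehlerDifferential.D (Polynomial k) A a = 0 := by
      intro a
      have hmap := KaehlerDifferential.map_D k (Polynomial k) A A a
      have hmap' := KaehlerDifferential.map_D k (Polynomial k) A A t
      simp only [Algebra.algebraMap_self, RingHom.id_apply] at hmap hmap'
      rw [← hmap, hd a, map_smul, hmap', htt, smul_zero]
    have hbot : (⊤ : Submodule A (Ω[A⁄Polynomial k])) ≤ ⊥ := by
      rw [← KaehlerDifferential.span_range_derivation]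
      refine Submodule.span_le.2 ?_
      rintro _ ⟨a, rfl⟩
      simp [hDzero a]
    exact subsingleton_of_forall_eq 0 fun ω =>
      (Submodule.mem_bot A).mp (hbot Submodule.mem_top)
  -- algebra structure on B over k[t] via φ₀
  letI : Algebra (Polynomial k) B :=
    ((φ₀.toRingHom).comp (algebraMap (Polynomial k) A)).toAlgebra
  set φ' : A →ₐ[Polynomial k] B :=
    { toRingHom := φ₀.toRingHom, commutes' := fun p => rfl } with hφ'
  have hcomm : ∀ p : Polynomial k,
      ψ₀ (algebraMap (Polynomial k) A p) = φ₀ (algebraMap (Polynomial k) A p) := by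
    have hext : ψ₀.comp (Polynomial.aeval t : Polynomial k →ₐ[k] A)
        = φ₀.comp (Polynomial.aeval t : Polynomial k →ₐ[k] A) := by
      apply Polynomial.algHom_ext
      simpa using hψt
    intro p
    exact AlgHom.congr_fun hext p
  set ψ' : A →ₐ[Polynomial k] B :=
    { toRingHom := ψ₀.toRingHom, commutes' := fun p => by
        show ψ₀ (algebraMap (Polynomial k) A p) = algebraMap (Polynomial k) B p
        rw [hcomm p]; rfl } with hψ'
  -- the image of I in B is nilpotent
  set JB : Ideal B := I.map (Ideal.Quotient.mk J) with hJB
  have hnil : IsNilpotent JB := by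
    refine ⟨r' + 2, ?_⟩
    rw [hJB, ← Ideal.map_pow, ← hJ]
    rw [Ideal.map_quotient_self]
    exact Ideal.zero_eq_bot.symm
  -- the two maps agree modulo JB
  have hWI : ∀ x : A, x ⊗ₜ[k] (1 : A) - W x ∈ I := by
    intro x
    rw [hI, RingHom.mem_ker, map_sub]
    have h1 : μ (x ⊗ₜ[k] (1 : A)) = x := by
      show Algebra.TensorProduct.lmul' k (S := A) (x ⊗ₜ[k] (1 : A)) = x
      simp
    have h2 : μ (W x) = x := by
      show Algebra.TensorProduct.lmul' k (S := A) (W x) = x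
      have hμδt : Algebra.TensorProduct.lmul' k (S := A) δt = 0 := by
        simp [hδt]
      simp only [hW]
      rw [map_sum, Finset.sum_eq_single 0]
      · simp
      · intro i _ hi
        rw [map_smul, map_mul, map_pow, hμδt, zero_pow hi, mul_zero, smul_zero]
      · intro h; simp at h
    rw [h1, h2, sub_self]
  have heq : φ' = ψ' := by
    refine Algebra.FormallyUnramified.ext JB hnil fun x => ?_
    rw [Ideal.Quotient.eq]
    have hφx : φ' x = Q (x ⊗ₜ[k] (1 : A)) := rfl
    have hψx : ψ' x = E x := rfl
    rw [hφx, hψx, ← hQW x]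
    have : Q (x ⊗ₜ[k] (1 : A)) - Q (W x) = Q (x ⊗ₜ[k] (1 : A) - W x) := by
      rw [map_sub]
    rw [this, hJB, hQ, Ideal.Quotient.mkₐ_eq_mk]
    exact Ideal.mem_map_of_mem _ (hWI x)
  -- conclusion
  have hfeq : Q (f ⊗ₜ[k] (1 : A)) = Q (W f) := by
    have h1 : φ' f = ψ' f := by rw [heq]
    have h2 : φ' f = Q (f ⊗ₜ[k] (1 : A)) := rfl
    have h3 : ψ' f = E f := rfl
    rw [h2, h3, ← hQW f] at h1
    exact h1
  have hmem : f ⊗ₜ[k] (1 : A) - W f ∈ J := by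
    have hfeq' : Ideal.Quotient.mk J (f ⊗ₜ[k] (1 : A)) = Ideal.Quotient.mk J (W f) := by
      have h := hfeq
      rw [hQ, Ideal.Quotient.mkₐ_eq_mk] at h
      exact h
    exact Ideal.Quotient.eq.mp hfeq'
  have hWf : W f = (1 : A) ⊗ₜ[k] f + ∑ i ∈ Finset.Icc 1 (r' + 1),
      algebraMap k (A ⊗[k] A) ((Nat.factorial i : k)⁻¹) *
        ((1 : A) ⊗ₜ[k] ((d ^ i) f)) * δt ^ i := by
    show (∑ i ∈ range (r' + 2),
      ((Nat.factorial i : k))⁻¹ • (((1 : A) ⊗ₜ[k] ((d ^ i) f)) * δt ^ i)) = _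
    rw [Finset.range_eq_Ico, Finset.sum_eq_sum_Ico_succ_bot (by omega)]
    congr 1
    · simp
    · rw [show r' + 2 = r' + 1 + 1 from rfl, Finset.Ico_add_one_right_eq_Icc]
      refine Finset.sum_congr rfl fun i _ => ?_
      rw [Algebra.smul_def, ← mul_assoc]
  have hgoal : f ⊗ₜ[k] (1 : A) - (1 : A) ⊗ₜ[k] f - ∑ i ∈ Finset.Icc 1 (r' + 1),
      algebraMap k (A ⊗[k] A) ((Nat.factorial i : k)⁻¹) *
        ((1 : A) ⊗ₜ[k] ((d ^ i) f)) * δt ^ i = f ⊗ₜ[k] (1 : A) - W f := by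
    rw [hWf]; ring
  rw [hgoal]
  exact hmem

/-- Taylor congruence: for the coordinate ring `A` of a non-singular integral
affine curve over a field `k` of characteristic `0` whose Kähler differentials
are free on `dt`, and `I = ker(μ : A ⊗ A → A)`, every `f ∈ A` and `r ≥ 1`
satisfy `δ(f) ≡ Σ_{i=1}^r (1/i!) f^{(i)} · δ(t)^i  (mod I^{r+1})`, where the
`A`-action on `A ⊗ A` is through the second factor and `f^{(i)} = d^i f` is
the iterated `d/dt`-derivative defined by `df = f'·dt`. -/
theorem stmt8 (k : Type u) [Field k] [CharZero k]
    (A : Type u) [CommRing A] [IsDomain A] [Algebra k A]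
    [Algebra.FiniteType k A] [Algebra.Smooth k A]
    (hdim : ringKrullDim A = 1)
    (t : A)
    (hfree : ∀ ω : Ω[A⁄k], ∃! c : A, ω = c • KaehlerDifferential.D k A t)
    (d : Module.End k A)
    (hd : ∀ f : A, KaehlerDifferential.D k A f =
      d f • KaehlerDifferential.D k A t) :
    ∀ (f : A) (r : ℕ), 1 ≤ r →
      letI δ : A → A ⊗[k] A := fun p => p ⊗ₜ[k] (1 : A) - (1 : A) ⊗ₜ[k] p
      letI I : Ideal (A ⊗[k] A) :=
        RingHom.ker (Algebra.TensorProduct.lmul' k (S := A)).toRingHom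
      δ f - ∑ i ∈ Finset.Icc 1 r,
          algebraMap k (A ⊗[k] A) ((Nat.factorial i : k)⁻¹) *
            ((1 : A) ⊗ₜ[k] ((d ^ i) f)) * (δ t) ^ i
        ∈ I ^ (r + 1) := by
  have hder : ∀ a b : A, d (a * b) = a * d b + b * d a := by
    intro a b
    refine ExistsUnique.unique (hfree (KaehlerDifferential.D k A (a * b))) (hd (a * b)) ?_
    rw [Derivation.leibniz, hd a, hd b, smul_smul, smul_smul, ← add_smul]
  have hdt : d t = 1 :=
    ExistsUnique.unique (hfree (KaehlerDifferential.D k A t)) (hd t)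
      (one_smul A (KaehlerDifferential.D k A t)).symm
  intro f r hr
  exact taylorAux k A t d hder hdt hd f r hr
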